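/- Let $\sigma \in (5/3, 2)$, $\mu = (\sigma - 5/3)^{-1}$, $\beta \in (0, \sigma - 5/3)$, and suppose $F : [0,\infty) \to [0,\infty)$ is a (time-dependent) probability density whose moment $M_\beta(\tau) = \int_0^\infty (1+\xi)^\beta F(\xi,\tau)\,d\xi$ satisfies the differential inequality $\partial_\tau M_\beta + \beta\mu M_\beta \le \int_0^\infty\!\!\int_0^\infty y^{-\sigma}\big((1+x)^{1/3} + y^{1/3}\big)^2 F(x)\,(1+x)^\beta\big[\big(1 + \tfrac{y}{1+x}\big)^\beta - 1\big]\,dy\,dx$. Then $\partial_\tau M_\beta + \beta\mu M_\beta \le C_{\beta,\sigma}$ where $C_{\beta,\sigma} = \int_0^\infty y^{-\sigma}\big[(1+y)^\beta - 1\big](1 + y^{1/3})^2\,dy < \infty$; in particular the set $\{M_\beta \le C_{\beta,\sigma}/(\beta\mu)\}$ is forward invariant. -/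

import Mathlib

open MeasureTheory Set

set_option maxHeartbeats 1000000 in
/-- for `σ ∈ (5/3,2)`, `μ = (σ-5/3)⁻¹`, `β ∈ (0, σ-5/3)` and a
time-dependent probability density `F` whose moment
`M_β(τ) = ∫_0^∞ (1+ξ)^β F(ξ,τ) dξ` satisfies the stated differential inequality,
one has `M_β' + βμ M_β ≤ C_{β,σ} = ∫_0^∞ y^{-σ}[(1+y)^β - 1](1+y^{1/3})² dy < ∞`;
in particular the set `{M_β ≤ C_{β,σ}/(βμ)}` is forward invariant. -/
theorem stmt15 (σ β μ : ℝ) (hσ : σ ∈ Ioo (5/3 : ℝ) 2) (hβ : β ∈ Ioo (0:ℝ) (σ - 5/3))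
    (hμ : μ = (σ - 5/3)⁻¹)
    (F : ℝ → ℝ → ℝ)
    (hFnn : ∀ τ : ℝ, 0 ≤ τ → ∀ x : ℝ, 0 ≤ x → 0 ≤ F x τ)
    (hFint : ∀ τ : ℝ, 0 ≤ τ → IntegrableOn (fun x => F x τ) (Ioi (0:ℝ)) volume)
    (hFprob : ∀ τ : ℝ, 0 ≤ τ → ∫ x in Ioi (0:ℝ), F x τ = 1)
    (M M' : ℝ → ℝ)
    (hM : ∀ τ : ℝ, 0 ≤ τ → M τ = ∫ ξ in Ioi (0:ℝ), (1 + ξ) ^ β * F ξ τ)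
    (hd : ∀ τ : ℝ, 0 ≤ τ → HasDerivAt M (M' τ) τ)
    (hineq : ∀ τ : ℝ, 0 ≤ τ → M' τ + β * μ * M τ ≤
      ∫ x in Ioi (0:ℝ), ∫ y in Ioi (0:ℝ),
        y ^ (-σ) * ((1 + x) ^ ((1:ℝ)/3) + y ^ ((1:ℝ)/3)) ^ 2 * F x τ * (1 + x) ^ β
          * ((1 + y / (1 + x)) ^ β - 1)) :
    IntegrableOn (fun y : ℝ => y ^ (-σ) * ((1 + y) ^ β - 1) * (1 + y ^ ((1:ℝ)/3)) ^ 2)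
        (Ioi (0:ℝ)) volume ∧
    (∀ τ : ℝ, 0 ≤ τ → M' τ + β * μ * M τ ≤
      ∫ y in Ioi (0:ℝ), y ^ (-σ) * ((1 + y) ^ β - 1) * (1 + y ^ ((1:ℝ)/3)) ^ 2) ∧
    (∀ s t : ℝ, 0 ≤ s → s ≤ t →
      M s ≤ (∫ y in Ioi (0:ℝ), y ^ (-σ) * ((1 + y) ^ β - 1) * (1 + y ^ ((1:ℝ)/3)) ^ 2)
              / (β * μ) →
      M t ≤ (∫ y in Ioi (0:ℝ), y ^ (-σ) * ((1 + y) ^ β - 1) * (1 + y ^ ((1:ℝ)/3)) ^ 2)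
              / (β * μ)) := by
  obtain ⟨hσ1, hσ2⟩ := hσ
  obtain ⟨hβ0, hβσ⟩ := hβ
  have hβ1 : β ≤ 1 := by linarith
  set g : ℝ → ℝ := fun y => y ^ (-σ) * ((1 + y) ^ β - 1) * (1 + y ^ ((1:ℝ)/3)) ^ 2 with hg
  -- measurability of g
  have hmeas : AEStronglyMeasurable g (volume.restrict (Ioi (0:ℝ))) := by
    have m1 : Measurable fun y : ℝ => y ^ (-σ) := measurable_id.pow_const _
    have m2 : Measurable fun y : ℝ => (1+y) ^ β - 1 :=
      ((measurable_const.add measurable_id).pow_const _).sub measurable_const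
    have m3 : Measurable fun y : ℝ => (1 + y ^ ((1:ℝ)/3)) ^ 2 :=
      (measurable_const.add (measurable_id.pow_const _)).pow_const 2
    exact ((m1.mul m2).mul m3).aestronglyMeasurable
  -- Part 1: integrability of g
  have hsplit : Ioi (0:ℝ) = Ioc 0 1 ∪ Ioi 1 := (Ioc_union_Ioi_eq_Ioi zero_le_one).symm
  have hgint : IntegrableOn g (Ioi (0:ℝ)) volume := by
    rw [hsplit]
    apply IntegrableOn.union
    · have hbd : IntegrableOn (fun y : ℝ => 8 * y ^ (1 - σ)) (Ioc (0:ℝ) 1) volume := by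
        have := (intervalIntegral.integrableOn_Ioo_rpow_iff (s := 1 - σ) (zero_lt_one)).mpr
          (by linarith)
        exact ((this.congr_set_ae Ioo_ae_eq_Ioc.symm).const_mul 8)
      refine Integrable.mono' hbd (hmeas.mono_set (by rw [hsplit]; exact subset_union_left)) ?_
      rw [ae_restrict_iff' measurableSet_Ioc]
      filter_upwards with y hy
      obtain ⟨hy0, hy1⟩ := hy
      simp only [hg]
      have hA : (0:ℝ) ≤ y ^ (-σ) := Real.rpow_nonneg hy0.le _
      have hB0 : (0:ℝ) ≤ (1 + y) ^ β - 1 := by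
        have := Real.one_le_rpow (x := 1 + y) (by linarith) hβ0.le; linarith
      have hB : (1 + y) ^ β - 1 ≤ y := by
        have := rpow_one_add_le_one_add_mul_self (s := y) (by linarith) hβ0.le hβ1
        nlinarith
      have hC0 : (0:ℝ) ≤ (1 + y ^ ((1:ℝ)/3)) ^ 2 := sq_nonneg _
      have hC : (1 + y ^ ((1:ℝ)/3)) ^ 2 ≤ 4 := by
        have h1 : y ^ ((1:ℝ)/3) ≤ 1 := Real.rpow_le_one hy0.le hy1 (by norm_num)
        have h2 : (0:ℝ) ≤ y ^ ((1:ℝ)/3) := Real.rpow_nonneg hy0.le _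
        nlinarith
      have hArw : y ^ (1 - σ) = y ^ (-σ) * y := by
        rw [show (1 - σ) = -σ + 1 by ring, Real.rpow_add hy0, Real.rpow_one]
      rw [Real.norm_eq_abs, abs_of_nonneg (by positivity), hArw]
      nlinarith [mul_nonneg hA hB0, mul_nonneg (mul_nonneg hA hB0) hC0,
        mul_le_mul_of_nonneg_left hB hA]
    · have hbd : IntegrableOn (fun y : ℝ => 8 * y ^ (β + 2/3 - σ)) (Ioi (1:ℝ)) volume :=
        (integrableOn_Ioi_rpow_of_lt (by linarith) zero_lt_one).const_mul 8
      refine Integrable.mono' hbd (hmeas.mono_set (by rw [hsplit]; exact subset_union_right)) ?_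
      rw [ae_restrict_iff' measurableSet_Ioi]
      filter_upwards with y hy
      rw [mem_Ioi] at hy
      simp only [hg]
      have hy0 : (0:ℝ) < y := by linarith
      have hA : (0:ℝ) ≤ y ^ (-σ) := Real.rpow_nonneg hy0.le _
      have hyb : (0:ℝ) ≤ y ^ β := Real.rpow_nonneg hy0.le _
      have hB0 : (0:ℝ) ≤ (1 + y) ^ β - 1 := by
        have := Real.one_le_rpow (x := 1 + y) (by linarith) hβ0.le; linarith
      have hB : (1 + y) ^ β - 1 ≤ 2 * y ^ β := by
        have h1 : (1 + y) ^ β ≤ (2 * y) ^ β :=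
          Real.rpow_le_rpow (by linarith) (by linarith) hβ0.le
        have h2 : (2 * y) ^ β = 2 ^ β * y ^ β := Real.mul_rpow (by norm_num) hy0.le
        have h3 : (2:ℝ) ^ β ≤ 2 := by
          calc (2:ℝ) ^ β ≤ 2 ^ (1:ℝ) := Real.rpow_le_rpow_of_exponent_le one_le_two hβ1
          _ = 2 := Real.rpow_one 2
        nlinarith
      have hy3 : (1:ℝ) ≤ y ^ ((1:ℝ)/3) := Real.one_le_rpow hy.le (by norm_num)
      have hC0 : (0:ℝ) ≤ (1 + y ^ ((1:ℝ)/3)) ^ 2 := sq_nonneg _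
      have hC : (1 + y ^ ((1:ℝ)/3)) ^ 2 ≤ 4 * y ^ ((2:ℝ)/3) := by
        have h2 : y ^ ((2:ℝ)/3) = y ^ ((1:ℝ)/3) * y ^ ((1:ℝ)/3) := by
          rw [← Real.rpow_add hy0]; norm_num
        nlinarith
      have hArw : y ^ (β + 2/3 - σ) = y ^ (-σ) * y ^ β * y ^ ((2:ℝ)/3) := by
        rw [← Real.rpow_add hy0, ← Real.rpow_add hy0]; ring_nf
      rw [Real.norm_eq_abs, abs_of_nonneg (by positivity), hArw]
      nlinarith [mul_nonneg hA hB0, mul_le_mul_of_nonneg_left hB hA,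
        mul_nonneg (mul_nonneg hA (by linarith : (0:ℝ) ≤ 2 * y ^ β)) hC0,
        mul_le_mul (mul_le_mul_of_nonneg_left hB hA) hC hC0 (mul_nonneg hA (by linarith))]
  -- nonnegativity of g and its integral
  set Cg := ∫ y in Ioi (0:ℝ), g y with hCg
  have hgnn : ∀ y : ℝ, 0 < y → 0 ≤ g y := by
    intro y hy
    have hB0 : (0:ℝ) ≤ (1 + y) ^ β - 1 := by
      have := Real.one_le_rpow (x := 1 + y) (by linarith) hβ0.le; linarith
    have := Real.rpow_nonneg hy.le (-σ)
    have := sq_nonneg (1 + y ^ ((1:ℝ)/3))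
    simp only [hg]; positivity
  have hCnn : 0 ≤ Cg := setIntegral_nonneg measurableSet_Ioi fun y hy => hgnn y hy
  -- Part 2
  have part2 : ∀ τ : ℝ, 0 ≤ τ → M' τ + β * μ * M τ ≤ Cg := by
    intro τ hτ
    refine (hineq τ hτ).trans ?_
    have hinner : ∀ x : ℝ, 0 < x →
        (∫ y in Ioi (0:ℝ), y ^ (-σ) * ((1 + x) ^ ((1:ℝ)/3) + y ^ ((1:ℝ)/3)) ^ 2 * F x τ
            * (1 + x) ^ β * ((1 + y / (1 + x)) ^ β - 1))
          = (1 + x) ^ (β + 5/3 - σ) * (F x τ * Cg) := by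
      intro x hx
      set c : ℝ := 1 + x with hc
      have hc0 : (0:ℝ) < c := by simp only [hc]; linarith
      set I : ℝ → ℝ := fun y => y ^ (-σ) * (c ^ ((1:ℝ)/3) + y ^ ((1:ℝ)/3)) ^ 2 * F x τ
            * c ^ β * ((1 + y / c) ^ β - 1) with hI
      have hsubst := integral_comp_mul_left_Ioi I 0 hc0
      rw [mul_zero] at hsubst
      have hpt : ∀ z ∈ Ioi (0:ℝ), I (c * z) = c ^ (β + 2/3 - σ) * (F x τ * g z) := by
        intro z hz
        rw [mem_Ioi] at hz
        have h1 : (c * z) ^ (-σ) = c ^ (-σ) * z ^ (-σ) := Real.mul_rpow hc0.le hz.le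
        have h2 : (c * z) ^ ((1:ℝ)/3) = c ^ ((1:ℝ)/3) * z ^ ((1:ℝ)/3) :=
          Real.mul_rpow hc0.le hz.le
        have h3 : c * z / c = z := by field_simp
        have h4 : (c ^ ((1:ℝ)/3) + (c * z) ^ ((1:ℝ)/3)) ^ 2
            = c ^ ((2:ℝ)/3) * (1 + z ^ ((1:ℝ)/3)) ^ 2 := by
          rw [h2, show c ^ ((1:ℝ)/3) + c ^ ((1:ℝ)/3) * z ^ ((1:ℝ)/3)
              = c ^ ((1:ℝ)/3) * (1 + z ^ ((1:ℝ)/3)) by ring, mul_pow,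
            show (c ^ ((1:ℝ)/3)) ^ 2 = c ^ ((1:ℝ)/3) * c ^ ((1:ℝ)/3) by ring,
            ← Real.rpow_add hc0]
          norm_num
        have h5 : c ^ (-σ) * c ^ ((2:ℝ)/3) * c ^ β = c ^ (β + 2/3 - σ) := by
          rw [← Real.rpow_add hc0, ← Real.rpow_add hc0]; ring_nf
        simp only [hI, hg, h1, h3, h4]
        calc c ^ (-σ) * z ^ (-σ) * (c ^ ((2:ℝ)/3) * (1 + z ^ ((1:ℝ)/3)) ^ 2) * F x τ * c ^ β
              * ((1 + z) ^ β - 1)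
            = (c ^ (-σ) * c ^ ((2:ℝ)/3) * c ^ β)
              * (F x τ * (z ^ (-σ) * ((1 + z) ^ β - 1) * (1 + z ^ ((1:ℝ)/3)) ^ 2)) := by ring
          _ = c ^ (β + 2/3 - σ)
              * (F x τ * (z ^ (-σ) * ((1 + z) ^ β - 1) * (1 + z ^ ((1:ℝ)/3)) ^ 2)) := by
              rw [h5]
      have hIeq : (∫ z in Ioi (0:ℝ), I (c * z))
          = c ^ (β + 2/3 - σ) * (F x τ * Cg) := by
        rw [setIntegral_congr_fun measurableSet_Ioi hpt, integral_const_mul, integral_const_mul]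
      have hItot : (∫ y in Ioi (0:ℝ), I y) = c * (c ^ (β + 2/3 - σ) * (F x τ * Cg)) := by
        rw [← hIeq, hsubst, smul_eq_mul, ← mul_assoc, mul_inv_cancel₀ hc0.ne', one_mul]
      rw [show (∫ y in Ioi (0:ℝ), y ^ (-σ) * (c ^ ((1:ℝ)/3) + y ^ ((1:ℝ)/3)) ^ 2 * F x τ
            * c ^ β * ((1 + y / c) ^ β - 1)) = ∫ y in Ioi (0:ℝ), I y from rfl, hItot,
        ← mul_assoc, show c * c ^ (β + 2/3 - σ) = c ^ (β + 5/3 - σ) by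
          rw [show c * c ^ (β + 2/3 - σ) = c ^ (1:ℝ) * c ^ (β + 2/3 - σ) by rw [Real.rpow_one],
            ← Real.rpow_add hc0]; ring_nf]
    calc (∫ x in Ioi (0:ℝ), ∫ y in Ioi (0:ℝ),
          y ^ (-σ) * ((1 + x) ^ ((1:ℝ)/3) + y ^ ((1:ℝ)/3)) ^ 2 * F x τ * (1 + x) ^ β
            * ((1 + y / (1 + x)) ^ β - 1))
        = ∫ x in Ioi (0:ℝ), (1 + x) ^ (β + 5/3 - σ) * (F x τ * Cg) :=
          setIntegral_congr_fun measurableSet_Ioi fun x hx => hinner x hx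
      _ ≤ ∫ x in Ioi (0:ℝ), F x τ * Cg := by
          have hbig : IntegrableOn (fun x => F x τ * Cg) (Ioi (0:ℝ)) volume :=
            (hFint τ hτ).mul_const Cg
          refine setIntegral_mono_on ?_ hbig measurableSet_Ioi ?_
          · refine Integrable.mono' hbig ?_ ?_
            · have m1 : Measurable fun x : ℝ => (1 + x) ^ (β + 5/3 - σ) :=
                (measurable_const.add measurable_id).pow_const _
              exact (m1.aestronglyMeasurable.mul
                ((hFint τ hτ).aestronglyMeasurable.mul aestronglyMeasurable_const))
            · rw [ae_restrict_iff' measurableSet_Ioi]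
              filter_upwards with x hx
              rw [mem_Ioi] at hx
              have h1 : (1 + x) ^ (β + 5/3 - σ) ≤ 1 :=
                Real.rpow_le_one_of_one_le_of_nonpos (by linarith) (by linarith)
              have h2 : (0:ℝ) ≤ (1 + x) ^ (β + 5/3 - σ) := Real.rpow_nonneg (by linarith) _
              have h3 : 0 ≤ F x τ * Cg := mul_nonneg (hFnn τ hτ x hx.le) hCnn
              rw [Real.norm_eq_abs, abs_of_nonneg (by positivity)]
              nlinarith
          · intro x hx
            rw [mem_Ioi] at hx
            have h1 : (1 + x) ^ (β + 5/3 - σ) ≤ 1 :=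
              Real.rpow_le_one_of_one_le_of_nonpos (by linarith) (by linarith)
            have h3 : 0 ≤ F x τ * Cg := mul_nonneg (hFnn τ hτ x hx.le) hCnn
            nlinarith
      _ = Cg := by rw [integral_mul_const, hFprob τ hτ, one_mul]
  refine ⟨hgint, part2, ?_⟩
  -- Part 3: forward invariance
  intro s t hs hst hMs
  set c0 : ℝ := β * μ with hc0def
  have hc0 : 0 < c0 := by
    have : 0 < μ := by rw [hμ]; exact inv_pos.mpr (by linarith)
    exact mul_pos hβ0 this
  set G : ℝ → ℝ := fun τ => (M τ - Cg / c0) * Real.exp (c0 * τ) with hG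
  have hGd : ∀ τ : ℝ, 0 ≤ τ →
      HasDerivAt G ((M' τ + c0 * M τ - Cg) * Real.exp (c0 * τ)) τ := by
    intro τ hτ
    have h1 : HasDerivAt (fun τ => M τ - Cg / c0) (M' τ) τ := (hd τ hτ).sub_const _
    have h2 : HasDerivAt (fun τ : ℝ => Real.exp (c0 * τ)) (c0 * Real.exp (c0 * τ)) τ := by
      have := ((hasDerivAt_id τ).const_mul c0).exp
      simp only [id, mul_one] at this
      simpa [mul_comm] using this
    have := h1.mul h2
    convert this using 1
    · rfl
    · rfl
    · rfl
    · have hcc : Cg / c0 * c0 = Cg := div_mul_cancel₀ Cg hc0.ne'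
      linear_combination Real.exp (c0 * τ) * hcc
  have hanti : AntitoneOn G (Icc s t) := by
    apply antitoneOn_of_deriv_nonpos (convex_Icc s t)
    · intro x hx
      exact (hGd x (hs.trans hx.1)).continuousAt.continuousWithinAt
    · intro x hx
      rw [interior_Icc] at hx
      exact (hGd x (by linarith [hx.1])).differentiableAt.differentiableWithinAt
    · intro x hx
      rw [interior_Icc] at hx
      have hx0 : (0:ℝ) ≤ x := by linarith [hx.1]
      rw [(hGd x hx0).deriv]
      have h1 : M' x + c0 * M x ≤ Cg := part2 x hx0
      have := Real.exp_pos (c0 * x)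
      nlinarith
  have hGt : G t ≤ G s := hanti (left_mem_Icc.mpr hst) (right_mem_Icc.mpr hst) hst
  have hGs : G s ≤ 0 := by
    have := Real.exp_pos (c0 * s)
    simp only [hG]
    nlinarith
  have hfin : (M t - Cg / c0) * Real.exp (c0 * t) ≤ 0 := le_trans hGt hGs
  have hexp := Real.exp_pos (c0 * t)
  nlinarith
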